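/- Let n ≥ 1, let x, h, η : Fin n → ℝ, and let δ ∈ ℝ with δ ≤ 1/2, |h_i| ≤ δ and |η_i| ≤ δ for all i. Define y_i = exp(x_i) / Σ_j exp(x_j) and ŷ_i = (exp(x_i + h_i)·(1 + η_i)) / Σ_j (exp(x_j + h_j)·(1 + η_j)). Then for every i, |ŷ_i − y_i| ≤ 16·δ. -/
import Mathlib


open Real Finset

/-- Error analysis of softmax: if the inputs are perturbed additively by `h i` with
`|h i| ≤ δ`, and each exponential is computed with relative error `η i` with `|η i| ≤ δ`,
where `δ ≤ 1/2`, then each output of softmax changes by at most `16 * δ`. -/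
theorem stmt_1 (n : ℕ) (hn : 1 ≤ n) (x h η : Fin n → ℝ) (δ : ℝ) (hδ : δ ≤ 1 / 2)
    (hh : ∀ i, |h i| ≤ δ) (hη : ∀ i, |η i| ≤ δ)
    (y yhat : Fin n → ℝ)
    (hy : ∀ i, y i = Real.exp (x i) / ∑ j, Real.exp (x j))
    (hyhat : ∀ i, yhat i = Real.exp (x i + h i) * (1 + η i) / ∑ j, Real.exp (x j + h j) * (1 + η j)) :
    ∀ i, |yhat i - y i| ≤ 16 * δ := by
  intro i
  have hδ0 : 0 ≤ δ := le_trans (abs_nonneg _) (hh ⟨0, hn⟩)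
  set S := ∑ j, Real.exp (x j) with hS
  set T := ∑ j, Real.exp (x j + h j) * (1 + η j) with hT
  set m := Real.exp (-δ) * (1 - δ) with hm
  set M := Real.exp δ * (1 + δ) with hM
  have hm0 : 0 < m := mul_pos (Real.exp_pos _) (by linarith)
  have hM0 : 0 < M := mul_pos (Real.exp_pos _) (by linarith)
  have hmM : m ≤ M := by
    have h1 : Real.exp (-δ) ≤ Real.exp δ := Real.exp_le_exp.mpr (by linarith)
    have h2 : (0:ℝ) < Real.exp (-δ) := Real.exp_pos _
    rw [hm, hM]
    nlinarith
  have hlow : ∀ j, Real.exp (x j) * m ≤ Real.exp (x j + h j) * (1 + η j) := by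
    intro j
    have h1 : Real.exp (x j + h j) = Real.exp (x j) * Real.exp (h j) := Real.exp_add _ _
    have h2 : Real.exp (-δ) ≤ Real.exp (h j) := Real.exp_le_exp.mpr (by linarith [(abs_le.mp (hh j)).1])
    have h3 : 1 - δ ≤ 1 + η j := by linarith [(abs_le.mp (hη j)).1]
    have h4 : (0:ℝ) < Real.exp (x j) := Real.exp_pos _
    have h5 : (0:ℝ) < Real.exp (-δ) := Real.exp_pos _
    have h6 : Real.exp (-δ) * (1 - δ) ≤ Real.exp (h j) * (1 + η j) :=
      mul_le_mul h2 h3 (by linarith) (Real.exp_pos _).le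
    rw [h1, hm, mul_assoc]
    exact mul_le_mul_of_nonneg_left h6 h4.le
  have hup : ∀ j, Real.exp (x j + h j) * (1 + η j) ≤ Real.exp (x j) * M := by
    intro j
    have h1 : Real.exp (x j + h j) = Real.exp (x j) * Real.exp (h j) := Real.exp_add _ _
    have h2 : Real.exp (h j) ≤ Real.exp δ := Real.exp_le_exp.mpr (by linarith [(abs_le.mp (hh j)).2])
    have h3 : 1 + η j ≤ 1 + δ := by linarith [(abs_le.mp (hη j)).2]
    have h3' : (0:ℝ) ≤ 1 + η j := by linarith [(abs_le.mp (hη j)).1]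
    have h4 : (0:ℝ) < Real.exp (x j) := Real.exp_pos _
    have h5 : (0:ℝ) < Real.exp (h j) := Real.exp_pos _
    have h6 : Real.exp (h j) * (1 + η j) ≤ Real.exp δ * (1 + δ) :=
      mul_le_mul h2 h3 h3' (Real.exp_pos _).le
    rw [h1, hM, mul_assoc]
    exact mul_le_mul_of_nonneg_left h6 h4.le
  have hne : (Finset.univ : Finset (Fin n)).Nonempty := ⟨⟨0, hn⟩, Finset.mem_univ _⟩
  have hS0 : 0 < S := Finset.sum_pos (fun j _ => Real.exp_pos _) hne
  have hTlow : S * m ≤ T := by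
    rw [hT, hS, Finset.sum_mul]
    exact Finset.sum_le_sum (fun j _ => hlow j)
  have hTup : T ≤ S * M := by
    rw [hT, hS, Finset.sum_mul]
    exact Finset.sum_le_sum (fun j _ => hup j)
  have hT0 : 0 < T := lt_of_lt_of_le (mul_pos hS0 hm0) hTlow
  have hyi := hy i
  have hyhi := hyhat i
  have hci_low := hlow i
  have hci_up := hup i
  have hxi0 : (0:ℝ) < Real.exp (x i) := Real.exp_pos _
  have hc0 : (0:ℝ) ≤ Real.exp (x i + h i) * (1 + η i) :=
    le_trans (le_of_lt (mul_pos hxi0 hm0)) hci_low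
  have hy1 : y i ≤ 1 := by
    rw [hyi, div_le_one hS0, hS]
    exact Finset.single_le_sum (fun j _ => le_of_lt (Real.exp_pos _)) (Finset.mem_univ i)
  have hyh1 : yhat i ≤ 1 := by
    rw [hyhi, div_le_one hT0, hT]
    exact Finset.single_le_sum
      (fun j _ => le_trans (le_of_lt (mul_pos (Real.exp_pos _) hm0)) (hlow j))
      (Finset.mem_univ i)
  have key1 : yhat i * (m / M) ≤ y i := by
    rw [hyi, hyhi, div_mul_div_comm, div_le_div_iff₀ (mul_pos hT0 hM0) hS0]
    nlinarith [mul_nonneg hc0 hm0.le, mul_le_mul_of_nonneg_right hci_up (mul_nonneg hm0.le hS0.le),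
      mul_le_mul_of_nonneg_left hTlow (mul_nonneg hxi0.le hM0.le)]
  have key2 : y i * (m / M) ≤ yhat i := by
    rw [hyi, hyhi, div_mul_div_comm, div_le_div_iff₀ (mul_pos hS0 hM0) hT0]
    nlinarith [mul_le_mul_of_nonneg_right hci_low hT0.le,
      mul_le_mul_of_nonneg_left hTup hc0]
  have hratio : 1 - 4 * δ ≤ m / M := by
    rw [le_div_iff₀ hM0]
    have e1 : (-(2*δ)) + 1 ≤ Real.exp (-(2*δ)) := Real.add_one_le_exp _
    have e2 : Real.exp (-δ) = Real.exp (-(2*δ)) * Real.exp δ := by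
      rw [← Real.exp_add]; ring_nf
    have e3 : (0:ℝ) < Real.exp δ := Real.exp_pos _
    have e4 : (0:ℝ) < Real.exp (-(2*δ)) := Real.exp_pos _
    have step1 : (1 - 4*δ) * (1 + δ) ≤ (1 - 2*δ) * (1 - δ) := by nlinarith
    have step2 : (1 - 2*δ) * (1 - δ) ≤ Real.exp (-(2*δ)) * (1 - δ) :=
      mul_le_mul_of_nonneg_right (by linarith) (by linarith)
    have step3 : (1 - 4*δ) * (1 + δ) ≤ Real.exp (-(2*δ)) * (1 - δ) := step1.trans step2
    have h7 : (1 - 4*δ) * (Real.exp δ * (1 + δ)) = Real.exp δ * ((1 - 4*δ) * (1 + δ)) := by ring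
    have h8 : Real.exp (-(2*δ)) * Real.exp δ * (1 - δ)
        = Real.exp δ * (Real.exp (-(2*δ)) * (1 - δ)) := by ring
    rw [hm, hM, e2, h7, h8]
    exact mul_le_mul_of_nonneg_left step3 e3.le
  clear_value S T m M
  have hbound : |yhat i - y i| ≤ 1 - m / M := by
    have h0 : (0:ℝ) ≤ 1 - m / M := by
      have := div_le_one_of_le₀ hmM hM0.le
      linarith
    have hmM' : 0 < m / M := div_pos hm0 hM0
    rw [abs_le]
    constructor
    · have h9 : y i * (1 - m / M) ≤ 1 * (1 - m / M) := mul_le_mul_of_nonneg_right hy1 h0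
      have h10 : y i * (1 - m / M) = y i - y i * (m / M) := by ring
      linarith
    · have h9 : yhat i * (1 - m / M) ≤ 1 * (1 - m / M) := mul_le_mul_of_nonneg_right hyh1 h0
      have h10 : yhat i * (1 - m / M) = yhat i - yhat i * (m / M) := by ring
      linarith
  have hfin : 1 - m / M ≤ 4 * δ := by linarith
  linarith
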